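/- arXiv:2404.02070 — 2 statements merged into one kernel-verified Lean document; each statement's English description precedes it below -/
import Mathlib

section
/- Let M and N be positive definite symmetric matrices. Then ‖√M - √N‖_op ≤ ‖(√M + √N)⁻¹‖_op · ‖M - N‖_op, where √· denotes the positive definite matrix square root and ‖·‖_op the operator norm. -/
open Matrix

-- The old Mathlib `Matrix.PosSemidef.sqrt` (removed since), restated with its original definition.
open scoped ComplexOrder in
noncomputable def Matrix.PosSemidef.sqrt {n 𝕜 : Type*} [Fintype n] [RCLike 𝕜] [DecidableEq n]
    {A : Matrix n n 𝕜} (hA : A.PosSemidef) : Matrix n n 𝕜 :=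
  (hA.1.eigenvectorUnitary : Matrix n n 𝕜) * diagonal (((↑) : ℝ → 𝕜) ∘ Real.sqrt ∘ hA.1.eigenvalues) *
    (star hA.1.eigenvectorUnitary : Matrix n n 𝕜)

open scoped ComplexOrder in
lemma Matrix.PosSemidef.posSemidef_sqrt {n 𝕜 : Type*} [Fintype n] [RCLike 𝕜] [DecidableEq n]
    {A : Matrix n n 𝕜} (hA : A.PosSemidef) : hA.sqrt.PosSemidef := by
  have h := (PosSemidef.diagonal (R := 𝕜) (n := n)
    (d := ((↑) : ℝ → 𝕜) ∘ Real.sqrt ∘ hA.1.eigenvalues)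
    (fun i => RCLike.ofReal_nonneg.mpr (Real.sqrt_nonneg _))).mul_mul_conjTranspose_same
    (hA.1.eigenvectorUnitary : Matrix n n 𝕜)
  rw [← star_eq_conjTranspose] at h
  exact h

open scoped ComplexOrder in
lemma Matrix.PosSemidef.sqrt_mul_self {n 𝕜 : Type*} [Fintype n] [RCLike 𝕜] [DecidableEq n]
    {A : Matrix n n 𝕜} (hA : A.PosSemidef) : hA.sqrt * hA.sqrt = A := by
  have hU : (star hA.1.eigenvectorUnitary : Matrix n n 𝕜) *
      (hA.1.eigenvectorUnitary : Matrix n n 𝕜) = 1 := Unitary.coe_star_mul_self _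
  conv_rhs => rw [hA.1.spectral_theorem, Unitary.conjStarAlgAut_apply]
  unfold Matrix.PosSemidef.sqrt
  rw [show ∀ a b c d e f : Matrix n n 𝕜, a * b * c * (d * e * f) = a * b * (c * d) * e * f by
    intros; simp only [Matrix.mul_assoc]]
  rw [hU, Matrix.mul_one, Matrix.mul_assoc (hA.1.eigenvectorUnitary : Matrix n n 𝕜),
    diagonal_mul_diagonal]
  congr 2
  funext i j
  simp only [diagonal_apply, Function.comp_apply, ← RCLike.ofReal_mul, Real.mul_self_sqrt (hA.eigenvalues_nonneg i)]
open scoped RealInnerProductSpace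

-- aux 1: sqrt of PosDef is PosDef
lemma aux_posDef_sqrt {n : ℕ} {M : Matrix (Fin n) (Fin n) ℝ} (hM : M.PosDef) :
    hM.posSemidef.sqrt.PosDef := by
  refine posDef_iff_dotProduct_mulVec.mpr ⟨hM.posSemidef.posSemidef_sqrt.1, fun x hx => ?_⟩
  rcases (hM.posSemidef.posSemidef_sqrt.dotProduct_mulVec_nonneg x).lt_or_eq with h | h
  · exact h
  · exfalso
    have h0 : hM.posSemidef.sqrt *ᵥ x = 0 :=
      (hM.posSemidef.posSemidef_sqrt.dotProduct_mulVec_zero_iff x).mp h.symm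
    have hMx : M *ᵥ x = 0 := by
      rw [← hM.posSemidef.sqrt_mul_self, ← mulVec_mulVec, h0, mulVec_zero]
    have := hM.dotProduct_mulVec_pos hx
    rw [hMx, dotProduct_zero] at this
    exact lt_irrefl 0 this

-- aux 2: eigenvector achieving at least the operator norm
lemma aux_exists_eigen {n : ℕ} (hn : 0 < n)
    (T : EuclideanSpace ℝ (Fin n) →L[ℝ] EuclideanSpace ℝ (Fin n)) (hT : IsSelfAdjoint T) :
    ∃ (μ : ℝ) (x : EuclideanSpace ℝ (Fin n)), ‖x‖ = 1 ∧ T x = μ • x ∧ ‖T‖ ≤ |μ| := by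
  have hsym := hT.isSymmetric
  have hrank : Module.finrank ℝ (EuclideanSpace ℝ (Fin n)) = n := finrank_euclideanSpace_fin
  set b := hsym.eigenvectorBasis hrank with hb
  set μ := hsym.eigenvalues hrank with hμ
  obtain ⟨j, -, hj⟩ := Finset.exists_max_image Finset.univ (fun i => |μ i|)
    ⟨⟨0, hn⟩, Finset.mem_univ _⟩
  refine ⟨μ j, b j, b.orthonormal.1 j, ?_, ?_⟩
  · have := hsym.apply_eigenvectorBasis hrank j
    exact this
  · refine T.opNorm_le_bound (abs_nonneg _) fun x => ?_
    rw [← b.repr.norm_map (T x), ← b.repr.norm_map x]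
    rw [EuclideanSpace.norm_eq, EuclideanSpace.norm_eq]
    rw [← Real.sqrt_sq (abs_nonneg (μ j)), ← Real.sqrt_mul (sq_nonneg _)]
    apply Real.sqrt_le_sqrt
    rw [Finset.mul_sum]
    apply Finset.sum_le_sum
    intro i _
    have hrepr : b.repr (T x) i = μ i * b.repr x i := by
      have := hsym.eigenvectorBasis_apply_self_apply hrank x i
      simpa using this
    rw [hrepr, norm_mul, mul_pow, Real.norm_eq_abs]
    have h1 : |μ i| ≤ |μ j| := hj i (Finset.mem_univ i)
    have h2 : |μ i|^2 ≤ |μ j|^2 := pow_le_pow_left₀ (abs_nonneg _) h1 2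
    exact mul_le_mul_of_nonneg_right h2 (sq_nonneg _)

noncomputable def opNorm {n : ℕ} (A : Matrix (Fin n) (Fin n) ℝ) : ℝ :=
  ‖Matrix.toEuclideanCLM (𝕜 := ℝ) A‖

theorem stmt8 {n : ℕ} (M N : Matrix (Fin n) (Fin n) ℝ) (hM : M.PosDef) (hN : N.PosDef) :
    opNorm (hM.posSemidef.sqrt - hN.posSemidef.sqrt)
      ≤ opNorm ((hM.posSemidef.sqrt + hN.posSemidef.sqrt)⁻¹) * opNorm (M - N) := by
  classical
  set A := hM.posSemidef.sqrt with hAdef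
  set B := hN.posSemidef.sqrt with hBdef
  have hA : A.PosSemidef := hM.posSemidef.posSemidef_sqrt
  have hB : B.PosSemidef := hN.posSemidef.posSemidef_sqrt
  have hApd : A.PosDef := aux_posDef_sqrt hM
  have hBpd : B.PosDef := aux_posDef_sqrt hN
  have hSpd : (A + B).PosDef := hApd.add hBpd
  rcases Nat.eq_zero_or_pos n with hn | hn
  · subst hn
    have h1 : A - B = 0 := Subsingleton.elim _ _
    have h2 : M - N = 0 := Subsingleton.elim _ _
    rw [opNorm, opNorm, opNorm, h1, h2, map_zero, norm_zero, mul_zero]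
  -- notation
  set φ := Matrix.toEuclideanCLM (𝕜 := ℝ) (n := Fin n) with hφ
  -- self-adjointness transfer
  have sa : ∀ (X : Matrix (Fin n) (Fin n) ℝ), X.IsHermitian → _root_.IsSelfAdjoint (φ X) := by
    intro X hX
    show star (φ X) = φ X
    rw [← map_star φ X, Matrix.star_eq_conjTranspose, hX.eq]
  have hT_sa : IsSelfAdjoint (φ (A - B)) := sa _ (hA.1.sub hB.1)
  obtain ⟨μ, x, hx1, hxe, hTle⟩ := aux_exists_eigen hn _ hT_sa
  -- square roots multiply back
  have hA2 : A * A = M := hM.posSemidef.sqrt_mul_self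
  have hB2 : B * B = N := hN.posSemidef.sqrt_mul_self
  -- the quantity c
  set c : ℝ := ⟪x, φ (A + B) x⟫ with hc
  -- step 2 : ⟪x, φ (M-N) x⟫ = μ * c
  have hMN : A * (A - B) + (A - B) * B = M - N := by
    rw [mul_sub, sub_mul, hA2, hB2]; abel
  have step2 : ⟪x, φ (M - N) x⟫ = μ * c := by
    rw [← hMN, map_add, _root_.map_mul, _root_.map_mul]
    have e1 : (φ A * φ (A - B)) x = φ A (φ (A - B) x) := rfl
    have e2 : (φ (A - B) * φ B) x = φ (A - B) (φ B x) := rfl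
    rw [ContinuousLinearMap.add_apply, e1, e2, inner_add_right, hxe, ContinuousLinearMap.map_smul,
      inner_smul_right]
    have e3 : ⟪x, φ (A - B) (φ B x)⟫ = ⟪φ (A - B) x, φ B x⟫ :=
      (hT_sa.isSymmetric x (φ B x)).symm
    rw [e3, hxe, inner_smul_left]
    have e4 : (φ (A + B)) x = φ A x + φ B x := by
      rw [map_add]; rfl
    rw [hc, e4, inner_add_right]
    simp [mul_add]
  have habs : |μ * c| ≤ opNorm (M - N) := by
    rw [← step2]
    calc |⟪x, φ (M - N) x⟫| ≤ ‖x‖ * ‖φ (M - N) x‖ := abs_real_inner_le_norm _ _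
      _ ≤ ‖x‖ * (‖φ (M - N)‖ * ‖x‖) := by
          gcongr; exact (φ (M - N)).le_opNorm x
      _ = opNorm (M - N) := by rw [hx1, opNorm]; ring
  -- step 3 : 1 ≤ opNorm (A+B)⁻¹ * c
  have hdet : (A + B).det ≠ 0 := hSpd.det_pos.ne'
  set R := hSpd.posSemidef.sqrt with hRdef
  have hRpd : R.PosDef := aux_posDef_sqrt hSpd
  have hR2 : R * R = A + B := hSpd.posSemidef.sqrt_mul_self
  have hRdet : IsUnit R.det := isUnit_iff_ne_zero.mpr hRpd.det_pos.ne'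
  have hkey : R * ((A + B)⁻¹ * R) = 1 := by
    rw [← hR2, Matrix.mul_inv_rev, Matrix.mul_assoc R⁻¹ R⁻¹ R,
      Matrix.nonsing_inv_mul _ hRdet, Matrix.mul_one, Matrix.mul_nonsing_inv _ hRdet]
  have hR_sa : IsSelfAdjoint (φ R) := sa _ hRpd.1
  have hone : ⟪φ R x, φ ((A + B)⁻¹) (φ R x)⟫ = 1 := by
    have e0 : ⟪φ R x, φ ((A + B)⁻¹) (φ R x)⟫ = ⟪x, φ R (φ ((A + B)⁻¹) (φ R x))⟫ :=
      hR_sa.isSymmetric x _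
    have e2 : φ R (φ ((A + B)⁻¹) (φ R x)) = (φ R * (φ ((A + B)⁻¹) * φ R)) x := rfl
    rw [e0, e2, ← _root_.map_mul, ← _root_.map_mul, hkey, _root_.map_one,
      ContinuousLinearMap.one_apply, real_inner_self_eq_norm_sq, hx1, one_pow]
  have hRx : ‖φ R x‖ ^ 2 = c := by
    rw [← real_inner_self_eq_norm_sq]
    have e0 : ⟪φ R x, φ R x⟫ = ⟪x, φ R (φ R x)⟫ := hR_sa.isSymmetric x _
    have e1 : φ R (φ R x) = (φ R * φ R) x := rfl
    rw [e0, e1, ← _root_.map_mul, hR2, hc]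
  have step3 : 1 ≤ opNorm ((A + B)⁻¹) * c := by
    calc (1:ℝ) = ⟪φ R x, φ ((A + B)⁻¹) (φ R x)⟫ := hone.symm
      _ ≤ ‖φ R x‖ * ‖φ ((A + B)⁻¹) (φ R x)‖ := real_inner_le_norm _ _
      _ ≤ ‖φ R x‖ * (‖φ ((A + B)⁻¹)‖ * ‖φ R x‖) := by
          gcongr; exact (φ ((A + B)⁻¹)).le_opNorm _
      _ = opNorm ((A + B)⁻¹) * c := by rw [opNorm, ← hRx]; ring
  -- combine
  have hninv : (0:ℝ) ≤ opNorm ((A + B)⁻¹) := norm_nonneg _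
  have hμc : |μ| * c ≤ opNorm (M - N) := by
    rcases le_or_gt 0 c with hc0 | hc0
    · calc |μ| * c = |μ * c| := by rw [abs_mul, abs_of_nonneg hc0]
        _ ≤ opNorm (M - N) := habs
    · nlinarith [abs_nonneg μ, abs_nonneg (μ * c), habs]
  have final : opNorm (A - B) ≤ |μ| := hTle
  nlinarith [abs_nonneg μ, norm_nonneg (φ (M - N)), mul_le_mul_of_nonneg_left step3 (abs_nonneg μ),
    mul_le_mul_of_nonneg_left hμc hninv]
end

section
/- For any two matrices W, W̃ ∈ ℝ^{p×M}, the positive semidefinite square roots of the Gram matrices satisfy ‖(W̃ᵀW̃)^{1/2} - (WᵀW)^{1/2}‖_F ≤ √2 · ‖W - W̃‖_F, where ‖·‖_F is the Frobenius norm. -/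
open Matrix

noncomputable def frobNorm {p M : ℕ} (A : Matrix (Fin p) (Fin M) ℝ) : ℝ :=
  Real.sqrt (∑ i, ∑ j, (A i j)^2)

noncomputable def posSemidefSqrt {n : Type*} [Fintype n] [DecidableEq n]
    {A : Matrix n n ℝ} (hA : A.PosSemidef) : Matrix n n ℝ :=
  (hA.1.eigenvectorUnitary : Matrix n n ℝ) * diagonal ((↑) ∘ (√·) ∘ hA.1.eigenvalues) *
    (star hA.1.eigenvectorUnitary : Matrix n n ℝ)

namespace Matrix.PosSemidef
open scoped MatrixOrder

variable {n : Type*} [Fintype n] [DecidableEq n]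

lemma posSemidef_sqrt_s9 {A : Matrix n n ℝ} (hA : A.PosSemidef) :
    (posSemidefSqrt hA).PosSemidef := by
  unfold posSemidefSqrt
  rw [star_eq_conjTranspose]
  exact (posSemidef_diagonal_iff.mpr fun i => by simp [Real.sqrt_nonneg]).mul_mul_conjTranspose_same _

lemma sq_sqrt {A : Matrix n n ℝ} (hA : A.PosSemidef) : posSemidefSqrt hA ^ 2 = A := by
  unfold posSemidefSqrt
  conv_rhs => rw [hA.1.spectral_theorem, Unitary.conjStarAlgAut_apply]
  rw [sq, show ∀ (X D Y : Matrix n n ℝ), X * D * Y * (X * D * Y) = X * (D * (Y * X) * D) * Y from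
    fun X D Y => by simp only [Matrix.mul_assoc], Unitary.coe_star_mul_self, Matrix.mul_one,
    diagonal_mul_diagonal]
  congr 3
  funext i
  simp [Real.mul_self_sqrt (hA.eigenvalues_nonneg i)]

lemma eq_sqrt_of_sq_eq {A B : Matrix n n ℝ} (hB : B.PosSemidef) (hA : A.PosSemidef)
    (h : B ^ 2 = A) : B = posSemidefSqrt hA := by
  have h1 : B * B = A := by rw [← sq, h]
  have h2 : posSemidefSqrt hA * posSemidefSqrt hA = A := by rw [← sq, sq_sqrt]
  rw [← CFC.sqrt_unique h1 (nonneg_iff_posSemidef.mpr hB),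
    ← CFC.sqrt_unique h2 (nonneg_iff_posSemidef.mpr (posSemidef_sqrt_s9 hA))]

lemma _root_.Matrix.posSemidef_iff_eq_transpose_mul_self {A : Matrix n n ℝ} :
    A.PosSemidef ↔ ∃ B : Matrix n n ℝ, A = Bᴴ * B := by
  constructor
  · intro hA
    obtain ⟨B, hB⟩ := CStarAlgebra.nonneg_iff_eq_star_mul_self.mp (nonneg_iff_posSemidef.mpr hA)
    exact ⟨B, by rw [hB, star_eq_conjTranspose]⟩
  · rintro ⟨B, rfl⟩
    exact posSemidef_conjTranspose_mul_self B

end Matrix.PosSemidef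

namespace AYaux

variable {m n : Type*} [Fintype m] [Fintype n]

/-- Squared Frobenius norm. -/
def frobSq (A : Matrix m n ℝ) : ℝ := ∑ i, ∑ j, (A i j)^2

lemma frobSq_nonneg (A : Matrix m n ℝ) : 0 ≤ frobSq A :=
  Finset.sum_nonneg fun _ _ => Finset.sum_nonneg fun _ _ => sq_nonneg _

lemma frobSq_eq_trace (A : Matrix m n ℝ) : frobSq A = (Aᴴ * A).trace := by
  simp only [frobSq, Matrix.trace, Matrix.diag, Matrix.mul_apply, conjTranspose_apply,
    star_trivial]
  rw [Finset.sum_comm]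
  simp [sq]

lemma frobSq_unitary_left [DecidableEq n] {U : Matrix n n ℝ} (hU : Uᴴ * U = 1)
    (A : Matrix n m ℝ) : frobSq (U * A) = frobSq A := by
  rw [frobSq_eq_trace, frobSq_eq_trace,
    show (U * A)ᴴ * (U * A) = Aᴴ * (Uᴴ * U * A) by simp only [conjTranspose_mul,
      Matrix.mul_assoc], hU, Matrix.one_mul]

lemma frobSq_unitary_right [DecidableEq n] {U : Matrix n n ℝ} (hU : U * Uᴴ = 1)
    (A : Matrix m n ℝ) : frobSq (A * U) = frobSq A := by
  rw [frobSq_eq_trace, frobSq_eq_trace, conjTranspose_mul,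
    show Uᴴ * Aᴴ * (A * U) = Uᴴ * (Aᴴ * A * U) by simp only [Matrix.mul_assoc],
    Matrix.trace_mul_comm, Matrix.mul_assoc, hU, Matrix.mul_one]

lemma frobSq_neg (A : Matrix m n ℝ) : frobSq (-A) = frobSq A := by
  simp [frobSq]


lemma frobSq_conjTranspose (A : Matrix m n ℝ) : frobSq Aᴴ = frobSq A := by
  unfold frobSq
  rw [Finset.sum_comm]
  simp

lemma frobSq_fromBlocks {l o : Type*} [Fintype l] [Fintype o]
    (A : Matrix n l ℝ) (B : Matrix n m ℝ) (C : Matrix o l ℝ) (D : Matrix o m ℝ) :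
    frobSq (fromBlocks A B C D) = frobSq A + frobSq B + frobSq C + frobSq D := by
  unfold frobSq
  rw [Fintype.sum_sum_type]
  simp only [Fintype.sum_sum_type, fromBlocks_apply₁₁, fromBlocks_apply₁₂, fromBlocks_apply₂₁,
    fromBlocks_apply₂₂, Finset.sum_add_distrib]
  ring

/-- The key lemma: the spectral absolute value is 1-Lipschitz in Frobenius norm. -/
lemma key {n : Type*} [Fintype n] [DecidableEq n] {S T : Matrix n n ℝ}
    (hS : S.IsHermitian) (hT : T.IsHermitian)
    (hS2 : (S ^ 2).PosSemidef) (hT2 : (T ^ 2).PosSemidef) :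
    frobSq (posSemidefSqrt hS2 - posSemidefSqrt hT2) ≤ frobSq (S - T) := by
  set U : Matrix n n ℝ := (hS.eigenvectorUnitary : Matrix n n ℝ) with hUdef
  set V : Matrix n n ℝ := (hT.eigenvectorUnitary : Matrix n n ℝ) with hVdef
  have hU1 : Uᴴ * U = 1 := by
    simpa [star_eq_conjTranspose] using UnitaryGroup.star_mul_self hS.eigenvectorUnitary
  have hU2 : U * Uᴴ = 1 := by
    simpa [star_eq_conjTranspose] using hS.eigenvectorUnitary.2.2
  have hV1 : Vᴴ * V = 1 := by
    simpa [star_eq_conjTranspose] using UnitaryGroup.star_mul_self hT.eigenvectorUnitary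
  have hV2 : V * Vᴴ = 1 := by
    simpa [star_eq_conjTranspose] using hT.eigenvectorUnitary.2.2
  set d := hS.eigenvalues with hddef
  set e := hT.eigenvalues with hedef
  have hSspec : S = U * diagonal d * Uᴴ := by
    have := hS.spectral_theorem
    rwa [show (RCLike.ofReal ∘ d) = d by funext i; simp, Unitary.conjStarAlgAut_apply, star_eq_conjTranspose] at this
  have hTspec : T = V * diagonal e * Vᴴ := by
    have := hT.spectral_theorem
    rwa [show (RCLike.ofReal ∘ e) = e by funext i; simp, Unitary.conjStarAlgAut_apply, star_eq_conjTranspose] at this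
  -- the spectral absolute values
  have sqlem : ∀ (P : Matrix n n ℝ) (f : n → ℝ) (h1 : Pᴴ * P = 1),
      (P * diagonal f * Pᴴ) ^ 2 = P * diagonal (fun i => f i ^ 2) * Pᴴ := by
    intro P f h1
    have : (P * diagonal f * Pᴴ) * (P * diagonal f * Pᴴ)
        = P * (diagonal f * (Pᴴ * P) * diagonal f) * Pᴴ := by
      simp only [Matrix.mul_assoc]
    rw [sq, this, h1, mul_one, diagonal_mul_diagonal]
    congr 1
    ext i
    simp [sq]
  have habsS : posSemidefSqrt hS2 = U * diagonal (fun i => |d i|) * Uᴴ := by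
    refine ((posSemidef_diagonal_iff.mpr fun i => abs_nonneg (d i)).mul_mul_conjTranspose_same
      U).eq_sqrt_of_sq_eq hS2 ?_ |>.symm
    rw [sqlem U _ hU1]
    conv_rhs => rw [hSspec, sqlem U d hU1]
    congr 1
    congr 1
    congr 1
    funext i
    simp [sq_abs]
  have habsT : posSemidefSqrt hT2 = V * diagonal (fun i => |e i|) * Vᴴ := by
    refine ((posSemidef_diagonal_iff.mpr fun i => abs_nonneg (e i)).mul_mul_conjTranspose_same
      V).eq_sqrt_of_sq_eq hT2 ?_ |>.symm
    rw [sqlem V _ hV1]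
    conv_rhs => rw [hTspec, sqlem V e hV1]
    congr 1
    congr 1
    congr 1
    funext i
    simp [sq_abs]
  -- conjugate the difference by Uᴴ on the left and V on the right
  set C : Matrix n n ℝ := Uᴴ * V with hCdef
  have conjlem : ∀ (f g : n → ℝ),
      Uᴴ * (U * diagonal f * Uᴴ - V * diagonal g * Vᴴ) * V
        = diagonal f * C - C * diagonal g := by
    intro f g
    rw [Matrix.mul_sub, Matrix.sub_mul]
    apply congrArg₂ HSub.hSub
    · calc Uᴴ * (U * diagonal f * Uᴴ) * V = (Uᴴ * U) * diagonal f * (Uᴴ * V) := by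
            simp only [Matrix.mul_assoc]
      _ = diagonal f * C := by rw [hU1, one_mul]
    · calc Uᴴ * (V * diagonal g * Vᴴ) * V = (Uᴴ * V) * diagonal g * (Vᴴ * V) := by
            simp only [Matrix.mul_assoc]
      _ = C * diagonal g := by rw [hV1, mul_one]
  have frobconj : ∀ (X : Matrix n n ℝ), frobSq (Uᴴ * X * V) = frobSq X := by
    intro X
    rw [frobSq_unitary_right hV2, frobSq_unitary_left (by simpa using hU2) X]
  have e1 : frobSq (posSemidefSqrt hS2 - posSemidefSqrt hT2)
      = frobSq (diagonal (fun i => |d i|) * C - C * diagonal (fun i => |e i|)) := by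
    rw [← conjlem, ← habsS, ← habsT, frobconj]
  have e2 : frobSq (S - T) = frobSq (diagonal d * C - C * diagonal e) := by
    conv_lhs => rw [hSspec, hTspec]
    rw [← conjlem, frobconj]
  rw [e1, e2]
  unfold frobSq
  refine Finset.sum_le_sum fun i _ => Finset.sum_le_sum fun j _ => ?_
  simp only [Matrix.sub_apply, diagonal_mul, mul_diagonal]
  have h1 : |d i| * C i j - C i j * |e j| = (|d i| - |e j|) * C i j := by ring
  have h2 : d i * C i j - C i j * e j = (d i - e j) * C i j := by ring
  rw [h1, h2, mul_pow, mul_pow]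
  have h3 : (|d i| - |e j|) ^ 2 ≤ (d i - e j) ^ 2 := by
    rw [← sq_abs (|d i| - |e j|), ← sq_abs (d i - e j)]
    exact pow_le_pow_left₀ (abs_nonneg _) (abs_abs_sub_abs_le_abs_sub _ _) 2
  exact mul_le_mul_of_nonneg_right h3 (sq_nonneg _)

end AYaux

open AYaux in
theorem stmt9 {p M : ℕ} (W Wt : Matrix (Fin p) (Fin M) ℝ) :
    frobNorm (posSemidefSqrt (Matrix.posSemidef_conjTranspose_mul_self Wt)
        - posSemidefSqrt (Matrix.posSemidef_conjTranspose_mul_self W))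
      ≤ Real.sqrt 2 * frobNorm (W - Wt) := by
  classical
  -- the self-adjoint dilations
  set S : Matrix (Fin M ⊕ Fin p) (Fin M ⊕ Fin p) ℝ := fromBlocks 0 Wtᴴ Wt 0 with hSdef
  set T : Matrix (Fin M ⊕ Fin p) (Fin M ⊕ Fin p) ℝ := fromBlocks 0 Wᴴ W 0 with hTdef
  have hS : S.IsHermitian := by
    rw [IsHermitian, hSdef, fromBlocks_conjTranspose]
    simp
  have hT : T.IsHermitian := by
    rw [IsHermitian, hTdef, fromBlocks_conjTranspose]
    simp
  have hSsq : S ^ 2 = fromBlocks (Wtᴴ * Wt) 0 0 (Wt * Wtᴴ) := by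
    rw [sq, hSdef, fromBlocks_multiply]
    simp
  have hTsq : T ^ 2 = fromBlocks (Wᴴ * W) 0 0 (W * Wᴴ) := by
    rw [sq, hTdef, fromBlocks_multiply]
    simp
  have hS2 : (S ^ 2).PosSemidef := by
    have := posSemidef_conjTranspose_mul_self S
    rwa [hS.eq, ← sq] at this
  have hT2 : (T ^ 2).PosSemidef := by
    have := posSemidef_conjTranspose_mul_self T
    rwa [hT.eq, ← sq] at this
  -- square root of a block-diagonal psd matrix
  have blocksqrt : ∀ (X : Matrix (Fin p) (Fin M) ℝ)
      (h2 : ((fromBlocks 0 Xᴴ X 0 : Matrix (Fin M ⊕ Fin p) (Fin M ⊕ Fin p) ℝ) ^ 2).PosSemidef),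
      posSemidefSqrt h2 = fromBlocks (posSemidefSqrt (Matrix.posSemidef_conjTranspose_mul_self X)) 0 0
        (posSemidefSqrt (Matrix.posSemidef_self_mul_conjTranspose X)) := by
    intro X h2
    have hXsq : (fromBlocks 0 Xᴴ X 0 : Matrix (Fin M ⊕ Fin p) (Fin M ⊕ Fin p) ℝ) ^ 2
        = fromBlocks (Xᴴ * X) 0 0 (X * Xᴴ) := by
      rw [sq, fromBlocks_multiply]; simp
    have hpsd : (fromBlocks (posSemidefSqrt (Matrix.posSemidef_conjTranspose_mul_self X)) 0 0
        (posSemidefSqrt (Matrix.posSemidef_self_mul_conjTranspose X))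
          : Matrix (Fin M ⊕ Fin p) (Fin M ⊕ Fin p) ℝ).PosSemidef := by
      have h1 := (Matrix.posSemidef_conjTranspose_mul_self X).posSemidef_sqrt_s9
      have h2' := (Matrix.posSemidef_self_mul_conjTranspose X).posSemidef_sqrt_s9
      obtain ⟨B1, hB1⟩ := posSemidef_iff_eq_transpose_mul_self.mp h1
      obtain ⟨B2, hB2⟩ := posSemidef_iff_eq_transpose_mul_self.mp h2'
      have : (fromBlocks (posSemidefSqrt (Matrix.posSemidef_conjTranspose_mul_self X)) 0 0
          (posSemidefSqrt (Matrix.posSemidef_self_mul_conjTranspose X))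
            : Matrix (Fin M ⊕ Fin p) (Fin M ⊕ Fin p) ℝ)
          = (fromBlocks B1 0 0 B2)ᴴ * fromBlocks B1 0 0 B2 := by
        rw [fromBlocks_conjTranspose, fromBlocks_multiply]
        simp [hB1, hB2]
      rw [this]
      exact posSemidef_conjTranspose_mul_self _
    refine (hpsd.eq_sqrt_of_sq_eq h2 ?_).symm
    rw [sq, fromBlocks_multiply, hXsq]
    simp [← sq, (Matrix.posSemidef_conjTranspose_mul_self X).sq_sqrt,
      (Matrix.posSemidef_self_mul_conjTranspose X).sq_sqrt]
  have hkey := key hS hT hS2 hT2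
  rw [blocksqrt Wt hS2, blocksqrt W hT2] at hkey
  have subblocks : ∀ (a a' : Matrix (Fin M) (Fin M) ℝ) (b b' : Matrix (Fin M) (Fin p) ℝ)
      (c c' : Matrix (Fin p) (Fin M) ℝ) (d d' : Matrix (Fin p) (Fin p) ℝ),
      fromBlocks a b c d - fromBlocks a' b' c' d'
        = fromBlocks (a - a') (b - b') (c - c') (d - d') := by
    intro a a' b b' c c' d d'
    ext (i | i) (j | j) <;> simp
  rw [subblocks, frobSq_fromBlocks] at hkey
  have hST : S - T = fromBlocks 0 (Wtᴴ - Wᴴ) (Wt - W) 0 := by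
    rw [hSdef, hTdef, subblocks]
    simp
  have hrhs : frobSq (S - T) = 2 * frobSq (W - Wt) := by
    rw [hST, frobSq_fromBlocks]
    have h1 : Wtᴴ - Wᴴ = (Wt - W)ᴴ := by rw [conjTranspose_sub]
    have h2 : Wt - W = -(W - Wt) := (neg_sub W Wt).symm
    rw [h1, frobSq_conjTranspose, h2, frobSq_neg]
    have : frobSq (0 : Matrix (Fin M) (Fin M) ℝ) = 0 := by simp [frobSq]
    have h0 : frobSq (0 : Matrix (Fin p) (Fin p) ℝ) = 0 := by simp [frobSq]
    rw [this, h0]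
    ring
  rw [hrhs] at hkey
  have hmain : frobSq (posSemidefSqrt (Matrix.posSemidef_conjTranspose_mul_self Wt)
      - posSemidefSqrt (Matrix.posSemidef_conjTranspose_mul_self W)) ≤ 2 * frobSq (W - Wt) := by
    have n1 := frobSq_nonneg ((0 : Matrix (Fin M) (Fin p) ℝ) - 0)
    have n2 := frobSq_nonneg ((0 : Matrix (Fin p) (Fin M) ℝ) - 0)
    have n3 := frobSq_nonneg (posSemidefSqrt (Matrix.posSemidef_self_mul_conjTranspose Wt)
      - posSemidefSqrt (Matrix.posSemidef_self_mul_conjTranspose W))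
    linarith [hkey]
  have hfn : ∀ {a b : ℕ} (A : Matrix (Fin a) (Fin b) ℝ),
      frobNorm A = Real.sqrt (frobSq A) := fun A => rfl
  rw [hfn, hfn]
  calc Real.sqrt (frobSq (posSemidefSqrt (Matrix.posSemidef_conjTranspose_mul_self Wt)
        - posSemidefSqrt (Matrix.posSemidef_conjTranspose_mul_self W)))
      ≤ Real.sqrt (2 * frobSq (W - Wt)) := Real.sqrt_le_sqrt hmain
    _ = Real.sqrt 2 * Real.sqrt (frobSq (W - Wt)) := Real.sqrt_mul (by norm_num) _
end
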